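/- Let h>0, α,β∈(0,1], d≥1, f: ℕ×ℝ^d→ℝ^d and x_a, x_0∈ℝ^d. A function X: ℕ→ℝ^d solves the sequential Caputo initial value problem if and only if it satisfies the summation (Volterra-type) equation X(n) = x_a + φ_{1,0}(n)·x_0 + h^{α+β}·∑_{r=0}^{n−2} c_{α+β}(n−2−r)·f(r, X(r)) for every n∈ℕ, where the sum is empty for n<2 and φ_{1,0}(n) = Γ(n+α)/(Γ(α+1)·Γ(n))·h^α for n≥1, φ_{1,0}(0)=0. -/

import Mathlib

/-- `c γ m = Γ(γ+m)/(Γ(γ)·Γ(m+1))`. -/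
noncomputable def cCoeff (γ : ℝ) (m : ℕ) : ℝ :=
  Real.Gamma (γ + m) / (Real.Gamma γ * Real.Gamma (m + 1))

/-- Caputo `h`-difference of order `α ∈ (0,1]` of an `ℝ^d`-valued sequence. -/
noncomputable def caputo (h α : ℝ) {d : ℕ} (u : ℕ → Fin d → ℝ) (n : ℕ) : Fin d → ℝ :=
  if α < 1 then
    h ^ (1 - α) • ∑ k ∈ Finset.range (n + 1), cCoeff (1 - α) (n - k) • (h⁻¹ • (u (k + 1) - u k))
  else h⁻¹ • (u (n + 1) - u n)

/-- `X` solves the sequential Caputo initial value problem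
`(C_β(C_α X))(n) = f(n, X(n))`, `X(0) = x_a`, `(C_α X)(0) = x_0`. -/
noncomputable def IsSolIVP (h α β : ℝ) {d : ℕ} (f : ℕ → (Fin d → ℝ) → Fin d → ℝ)
    (xa x0 : Fin d → ℝ) (X : ℕ → Fin d → ℝ) : Prop :=
  (∀ n : ℕ, caputo h β (caputo h α X) n = f n (X n)) ∧ X 0 = xa ∧ caputo h α X 0 = x0

/-- The function `φ_{k,s}` of the paper. -/
noncomputable def phi (h α β : ℝ) (k s : ℕ) (n : ℤ) : ℝ :=
  if (k : ℤ) ≤ n then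
    Real.Gamma ((n : ℝ) - (k : ℝ) + 1 + (k : ℝ) * α + (s : ℝ) * β)
      / (Real.Gamma ((k : ℝ) * α + (s : ℝ) * β + 1) * Real.Gamma ((n : ℝ) - (k : ℝ) + 1))
      * h ^ ((k : ℝ) * α + (s : ℝ) * β)
  else 0

namespace SeqCaputo

open Finset

noncomputable def conv (a b : ℕ → ℝ) (m : ℕ) : ℝ :=
  ∑ j ∈ Finset.range (m + 1), a (m - j) * b j

noncomputable def dif (b : ℕ → ℝ) (m : ℕ) : ℝ :=
  b m - if m = 0 then 0 else b (m - 1)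

lemma Gamma_nat_ne_zero (m : ℕ) : Real.Gamma ((m : ℝ) + 1) ≠ 0 :=
  (Real.Gamma_pos_of_pos (by positivity)).ne'

lemma cCoeff_zero {γ : ℝ} (hγ : 0 < γ) : cCoeff γ 0 = 1 := by
  have h : Real.Gamma γ ≠ 0 := (Real.Gamma_pos_of_pos hγ).ne'
  simp [cCoeff, Real.Gamma_one, h]

lemma cCoeff_one (m : ℕ) : cCoeff 1 m = 1 := by
  have h : Real.Gamma ((m : ℝ) + 1) ≠ 0 := Gamma_nat_ne_zero m
  rw [cCoeff, add_comm (1 : ℝ) (m : ℝ), Real.Gamma_one, one_mul, div_self h]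

lemma cCoeff_rec {γ : ℝ} (hγ : 0 < γ) (m : ℕ) :
    ((m : ℝ) + 1) * cCoeff γ (m + 1) = (γ + m) * cCoeff γ m := by
  have hg : Real.Gamma γ ≠ 0 := (Real.Gamma_pos_of_pos hγ).ne'
  have hm : Real.Gamma ((m : ℝ) + 1) ≠ 0 := Gamma_nat_ne_zero m
  have hgm : (0 : ℝ) < γ + m := by
    have : (0 : ℝ) ≤ (m : ℝ) := Nat.cast_nonneg m
    linarith
  have h1 : Real.Gamma (γ + ((m : ℕ) + 1 : ℕ)) = (γ + m) * Real.Gamma (γ + m) := by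
    push_cast
    rw [show γ + ((m : ℝ) + 1) = (γ + m) + 1 by ring, Real.Gamma_add_one hgm.ne']
  have h2 : Real.Gamma ((((m : ℕ) + 1 : ℕ) : ℝ) + 1) = ((m : ℝ) + 1) * Real.Gamma ((m : ℝ) + 1) := by
    push_cast
    rw [show (m : ℝ) + 1 + 1 = ((m : ℝ) + 1) + 1 by ring,
      Real.Gamma_add_one (by positivity)]
  rw [cCoeff, cCoeff, h1, h2]
  field_simp

lemma vandermonde {γ δ : ℝ} (hγ : 0 < γ) (hδ : 0 < δ) (m : ℕ) :
    conv (cCoeff γ) (cCoeff δ) m = cCoeff (γ + δ) m := by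
  induction m with
  | zero => simp [conv, cCoeff_zero hγ, cCoeff_zero hδ, cCoeff_zero (by linarith : (0:ℝ) < γ + δ)]
  | succ m ih =>
    have hne : ((m : ℝ) + 1) ≠ 0 := by positivity
    have key : ((m : ℝ) + 1) * conv (cCoeff γ) (cCoeff δ) (m + 1)
        = (γ + δ + m) * conv (cCoeff γ) (cCoeff δ) m := by
      rw [conv, Finset.mul_sum]
      have split : ∀ j ∈ Finset.range (m + 1 + 1),
          ((m : ℝ) + 1) * (cCoeff γ (m + 1 - j) * cCoeff δ j)
            = (((m + 1 - j : ℕ) : ℝ) * cCoeff γ (m + 1 - j)) * cCoeff δ j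
              + cCoeff γ (m + 1 - j) * ((j : ℝ) * cCoeff δ j) := by
        intro j hj
        have hj' : j ≤ m + 1 := by
          have := Finset.mem_range.mp hj; omega
        have hc : ((m + 1 - j : ℕ) : ℝ) = (m : ℝ) + 1 - (j : ℝ) := by
          rw [Nat.cast_sub hj']; push_cast; ring
        rw [hc]; ring
      rw [Finset.sum_congr rfl split, Finset.sum_add_distrib]
      have T1 : ∑ j ∈ Finset.range (m + 1 + 1),
          (((m + 1 - j : ℕ) : ℝ) * cCoeff γ (m + 1 - j)) * cCoeff δ j
            = ∑ j ∈ Finset.range (m + 1), ((γ + ((m - j : ℕ) : ℝ)) * cCoeff γ (m - j)) * cCoeff δ j := by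
        rw [Finset.sum_range_succ]
        have hlast : (((m + 1 - (m + 1) : ℕ) : ℝ) * cCoeff γ (m + 1 - (m + 1))) * cCoeff δ (m + 1) = 0 := by
          simp
        rw [hlast, add_zero]
        refine Finset.sum_congr rfl fun j hj => ?_
        have hj' : j < m + 1 := Finset.mem_range.mp hj
        have h1 : m + 1 - j = (m - j) + 1 := by omega
        have h2 : ((m + 1 - j : ℕ) : ℝ) = ((m - j : ℕ) : ℝ) + 1 := by
          rw [h1]; push_cast; ring
        rw [h1, show ((m - j + 1 : ℕ) : ℝ) = ((m - j : ℕ) : ℝ) + 1 by push_cast; ring,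
          cCoeff_rec hγ (m - j)]
      have T2 : ∑ j ∈ Finset.range (m + 1 + 1),
          cCoeff γ (m + 1 - j) * ((j : ℝ) * cCoeff δ j)
            = ∑ j ∈ Finset.range (m + 1), cCoeff γ (m - j) * ((δ + (j : ℝ)) * cCoeff δ j) := by
        rw [Finset.sum_range_succ']
        have h0 : cCoeff γ (m + 1 - 0) * (((0 : ℕ) : ℝ) * cCoeff δ 0) = 0 := by simp
        rw [h0, add_zero]
        refine Finset.sum_congr rfl fun j hj => ?_
        have h1 : m + 1 - (j + 1) = m - j := by omega
        have h2 : ((j + 1 : ℕ) : ℝ) = (j : ℝ) + 1 := by push_cast; ring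
        rw [h1, h2, cCoeff_rec hδ j]
      rw [T1, T2, ← Finset.sum_add_distrib, conv, Finset.mul_sum]
      refine Finset.sum_congr rfl fun j hj => ?_
      have hj' : j < m + 1 := Finset.mem_range.mp hj
      have hc : ((m - j : ℕ) : ℝ) = (m : ℝ) - (j : ℝ) := by
        rw [Nat.cast_sub (by omega)]
      rw [hc]; ring
    have key2 : ((m : ℝ) + 1) * cCoeff (γ + δ) (m + 1) = (γ + δ + m) * cCoeff (γ + δ) m :=
      cCoeff_rec (by linarith : (0:ℝ) < γ + δ) m
    have := key.trans (by rw [ih, ← key2])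
    exact mul_left_cancel₀ hne this

lemma sum_cCoeff {γ : ℝ} (hγ : 0 < γ) (m : ℕ) :
    ∑ j ∈ Finset.range (m + 1), cCoeff γ j = cCoeff (γ + 1) m := by
  have := vandermonde one_pos hγ m
  rw [show (1 : ℝ) + γ = γ + 1 by ring] at this
  rw [← this, conv]
  exact Finset.sum_congr rfl fun j _ => by rw [cCoeff_one, one_mul]

lemma dif_cCoeff {γ : ℝ} (hγ : 0 < γ) (m : ℕ) :
    dif (cCoeff (γ + 1)) m = cCoeff γ m := by
  cases m with
  | zero => simp [dif, cCoeff_zero (by linarith : (0:ℝ) < γ + 1), cCoeff_zero hγ]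
  | succ p =>
    have h1 := sum_cCoeff hγ (p + 1)
    rw [Finset.sum_range_succ, sum_cCoeff hγ p] at h1
    simp only [dif, Nat.succ_ne_zero, if_false, Nat.add_sub_cancel]
    linarith

lemma conv_dif (a b : ℕ → ℝ) (m : ℕ) :
    conv a (dif b) m = dif (conv a b) m := by
  cases m with
  | zero => simp [conv, dif]
  | succ p =>
    have expand : ∀ j ∈ Finset.range (p + 1 + 1),
        a (p + 1 - j) * dif b j
          = a (p + 1 - j) * b j - a (p + 1 - j) * (if j = 0 then 0 else b (j - 1)) := by
      intro j _; rw [dif]; ring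
    rw [conv, Finset.sum_congr rfl expand, Finset.sum_sub_distrib]
    have h2 : ∑ j ∈ Finset.range (p + 1 + 1), a (p + 1 - j) * (if j = 0 then 0 else b (j - 1))
        = conv a b p := by
      rw [Finset.sum_range_succ']
      simp only [Nat.succ_ne_zero, if_false, Nat.add_sub_cancel, ite_true, mul_zero, add_zero]
      rw [conv]
      refine Finset.sum_congr rfl fun j hj => ?_
      congr 2
      omega
    rw [h2, dif]
    simp [conv]

section Part2

open Finset

variable {M : Type*} [AddCommGroup M] [Module ℝ M]

/-- Difference of consecutive convolution-type sums. -/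
lemma sum_sub_sum_eq (b : ℕ → ℝ) (F : ℕ → M) (k : ℕ) :
    (∑ r ∈ Finset.range k, b (k - 1 - r) • F r)
      - ∑ r ∈ Finset.range (k - 1), b (k - 2 - r) • F r
      = ∑ r ∈ Finset.range k, dif b (k - 1 - r) • F r := by
  cases k with
  | zero => simp
  | succ p =>
    simp only [Nat.add_sub_cancel]
    rw [Finset.sum_range_succ, Finset.sum_range_succ (fun r => dif b (p - r) • F r)]
    have h0 : dif b (p - p) = b 0 := by simp [dif]
    have hmain : ∀ r ∈ Finset.range p,
        dif b (p - r) • F r = b (p - r) • F r - b (p + 1 - 2 - r) • F r := by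
      intro r hr
      have hr' : r < p := Finset.mem_range.mp hr
      have hne : ¬ (p - r = 0) := by omega
      have he : p - r - 1 = p + 1 - 2 - r := by omega
      rw [dif, if_neg hne, he, sub_smul]
    rw [Finset.sum_congr rfl hmain, Finset.sum_sub_distrib, h0]
    simp only [Nat.sub_self]
    abel

lemma swap1 (n : ℕ) (g b : ℕ → ℝ) (F : ℕ → M) :
    ∑ k ∈ Finset.range (n + 1), g (n - k) • ∑ r ∈ Finset.range k, b (k - 1 - r) • F r
      = ∑ r ∈ Finset.range n, conv g b (n - 1 - r) • F r := by
  have h1 : ∀ k ∈ Finset.range (n + 1),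
      g (n - k) • ∑ r ∈ Finset.range k, b (k - 1 - r) • F r
        = ∑ r ∈ Finset.range k, (g (n - k) * b (k - 1 - r)) • F r := by
    intro k _
    rw [Finset.smul_sum]
    exact Finset.sum_congr rfl fun r _ => smul_smul _ _ _
  rw [Finset.sum_congr rfl h1]
  rw [Finset.sum_comm' (t' := Finset.range n) (s' := fun r => Finset.Ico (r + 1) (n + 1))
    (fun k r => by simp only [Finset.mem_range, Finset.mem_Ico]; omega)]
  refine Finset.sum_congr rfl fun r hr => ?_
  have hr' : r < n := Finset.mem_range.mp hr
  rw [Finset.sum_Ico_eq_sum_range, show n + 1 - (r + 1) = (n - 1 - r) + 1 by omega]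
  rw [conv, Finset.sum_smul]
  refine Finset.sum_congr rfl fun j hj => ?_
  have hj' : j < n - 1 - r + 1 := Finset.mem_range.mp hj
  congr 2
  · congr 1; omega
  · congr 1; omega

lemma swap2 (n : ℕ) (g e : ℕ → ℝ) (F : ℕ → M) :
    ∑ k ∈ Finset.range (n + 1), g (n - k) • ∑ r ∈ Finset.range (k + 1), e (k - r) • F r
      = ∑ r ∈ Finset.range (n + 1), conv g e (n - r) • F r := by
  have h1 : ∀ k ∈ Finset.range (n + 1),
      g (n - k) • ∑ r ∈ Finset.range (k + 1), e (k - r) • F r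
        = ∑ r ∈ Finset.range (k + 1), (g (n - k) * e (k - r)) • F r := by
    intro k _
    rw [Finset.smul_sum]
    exact Finset.sum_congr rfl fun r _ => smul_smul _ _ _
  rw [Finset.sum_congr rfl h1]
  rw [Finset.sum_comm' (t' := Finset.range (n + 1)) (s' := fun r => Finset.Ico r (n + 1))
    (fun k r => by simp only [Finset.mem_range, Finset.mem_Ico]; omega)]
  refine Finset.sum_congr rfl fun r hr => ?_
  have hr' : r < n + 1 := Finset.mem_range.mp hr
  rw [Finset.sum_Ico_eq_sum_range, show n + 1 - r = (n - r) + 1 by omega]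
  rw [conv, Finset.sum_smul]
  refine Finset.sum_congr rfl fun j hj => ?_
  have hj' : j < n - r + 1 := Finset.mem_range.mp hj
  congr 2
  · congr 1; omega
  · congr 1; omega

end Part2

section Part3

open Finset

variable {h α β : ℝ} {d : ℕ}

noncomputable def Zfun (h α β : ℝ) (xa x0 : Fin d → ℝ) (F : ℕ → Fin d → ℝ) (n : ℕ) :
    Fin d → ℝ :=
  xa + phi h α β 1 0 (n : ℤ) • x0
    + h ^ (α + β) • ∑ r ∈ Finset.range (n - 1), cCoeff (α + β) (n - 2 - r) • F r

noncomputable def Yfun (h β : ℝ) (x0 : Fin d → ℝ) (F : ℕ → Fin d → ℝ) (n : ℕ) :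
    Fin d → ℝ :=
  x0 + h ^ β • ∑ r ∈ Finset.range n, cCoeff β (n - 1 - r) • F r

lemma Zfun_zero (xa x0 : Fin d → ℝ) (F : ℕ → Fin d → ℝ) : Zfun h α β xa x0 F 0 = xa := by
  have hphi : phi h α β 1 0 (0 : ℤ) = 0 := by
    rw [phi, if_neg (by norm_num)]
  simp [Zfun, Nat.cast_zero, hphi]

lemma Yfun_zero (x0 : Fin d → ℝ) (F : ℕ → Fin d → ℝ) : Yfun h β x0 F 0 = x0 := by
  simp [Yfun]

lemma phi_eq (hh : 0 < h) (hα1 : 0 < α) (n : ℕ) :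
    phi h α β 1 0 ((n : ℕ) : ℤ) = h ^ α * ∑ j ∈ Finset.range n, cCoeff α j := by
  cases n with
  | zero => rw [phi, if_neg (by norm_num)]; simp
  | succ m =>
    have hle : ((1 : ℕ) : ℤ) ≤ (((m + 1 : ℕ) : ℕ) : ℤ) := by
      push_cast; omega
    rw [phi, if_pos hle, sum_cCoeff hα1 m]
    have e1 : ((((m + 1 : ℕ) : ℤ)) : ℝ) - ((1 : ℕ) : ℝ) + 1 + ((1 : ℕ) : ℝ) * α
        + ((0 : ℕ) : ℝ) * β = α + 1 + (m : ℝ) := by push_cast; ring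
    have e2 : ((1 : ℕ) : ℝ) * α + ((0 : ℕ) : ℝ) * β + 1 = α + 1 := by push_cast; ring
    have e3 : ((((m + 1 : ℕ) : ℤ)) : ℝ) - ((1 : ℕ) : ℝ) + 1 = ((m : ℕ) : ℝ) + 1 := by
      push_cast; ring
    have e4 : ((1 : ℕ) : ℝ) * α + ((0 : ℕ) : ℝ) * β = α := by push_cast; ring
    rw [e1, e2, e3, e4, cCoeff]
    ring

/-- Unified formula for the Caputo difference given difference data of `u`. -/
lemma caputo_eq (hh : 0 < h) (hα1 : 0 < α) (hα2 : α ≤ 1) (u w : ℕ → Fin d → ℝ)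
    (hw : ∀ k, u (k + 1) - u k = h ^ α • w k) (n : ℕ) :
    caputo h α u n
      = if α < 1 then ∑ k ∈ Finset.range (n + 1), cCoeff (1 - α) (n - k) • w k else w n := by
  rw [caputo]
  by_cases hc : α < 1
  · rw [if_pos hc, if_pos hc]
    have hterm : ∀ k ∈ Finset.range (n + 1),
        cCoeff (1 - α) (n - k) • (h⁻¹ • (u (k + 1) - u k))
          = (h⁻¹ * h ^ α) • (cCoeff (1 - α) (n - k) • w k) := by
      intro k _
      rw [hw k, smul_smul, smul_smul, smul_smul]
      congr 1
      ring
    rw [Finset.sum_congr rfl hterm, ← Finset.smul_sum, smul_smul]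
    have hscal : h ^ (1 - α) * (h⁻¹ * h ^ α) = 1 := by
      have h1 : h ^ (1 - α) * h ^ α = h := by
        rw [← Real.rpow_add hh]; norm_num
      calc h ^ (1 - α) * (h⁻¹ * h ^ α) = (h ^ (1 - α) * h ^ α) * h⁻¹ := by ring
        _ = h * h⁻¹ := by rw [h1]
        _ = 1 := mul_inv_cancel₀ hh.ne'
    rw [hscal, one_smul]
  · rw [if_neg hc, if_neg hc]
    have hα : α = 1 := le_antisymm hα2 (not_lt.mp hc)
    rw [hw n, smul_smul, hα, Real.rpow_one, inv_mul_cancel₀ hh.ne', one_smul]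

lemma Zfun_diff (hh : 0 < h) (hα1 : 0 < α) (hβ1 : 0 < β)
    (xa x0 : Fin d → ℝ) (F : ℕ → Fin d → ℝ) (k : ℕ) :
    Zfun h α β xa x0 F (k + 1) - Zfun h α β xa x0 F k
      = h ^ α • (cCoeff α k • x0
          + h ^ β • ∑ r ∈ Finset.range k, dif (cCoeff (α + β)) (k - 1 - r) • F r) := by
  have hphi : phi h α β 1 0 (((k + 1 : ℕ)) : ℤ) - phi h α β 1 0 ((k : ℕ) : ℤ)
      = h ^ α * cCoeff α k := by
    rw [phi_eq hh hα1, phi_eq hh hα1, Finset.sum_range_succ]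
    ring
  have hsum : (∑ r ∈ Finset.range (k + 1 - 1), cCoeff (α + β) (k + 1 - 2 - r) • F r)
      - ∑ r ∈ Finset.range (k - 1), cCoeff (α + β) (k - 2 - r) • F r
      = ∑ r ∈ Finset.range k, dif (cCoeff (α + β)) (k - 1 - r) • F r := by
    have h1 : k + 1 - 1 = k := by omega
    have h2 : ∀ r, k + 1 - 2 - r = k - 1 - r := fun r => by omega
    rw [h1]
    rw [Finset.sum_congr rfl (fun r _ => by rw [h2 r])]
    exact sum_sub_sum_eq _ F k
  have hpow : h ^ (α + β) = h ^ α * h ^ β := Real.rpow_add hh α β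
  rw [Zfun, Zfun]
  have : ∀ (a p q s t : Fin d → ℝ), a + p + s - (a + q + t) = (p - q) + (s - t) := by
    intro a p q s t; abel
  rw [this]
  rw [← sub_smul, hphi, ← smul_sub, hsum, hpow, smul_add, ← smul_smul, mul_smul]

lemma caputo_Zfun (hh : 0 < h) (hα1 : 0 < α) (hα2 : α ≤ 1) (hβ1 : 0 < β)
    (xa x0 : Fin d → ℝ) (F : ℕ → Fin d → ℝ) (n : ℕ) :
    caputo h α (Zfun h α β xa x0 F) n = Yfun h β x0 F n := by
  have hab : (0 : ℝ) < α + β := by linarith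
  rw [caputo_eq hh hα1 hα2 _ _ (Zfun_diff hh hα1 hβ1 xa x0 F) n]
  by_cases hc : α < 1
  · rw [if_pos hc]
    have h1α : (0 : ℝ) < 1 - α := by linarith
    have hsplit : ∀ k ∈ Finset.range (n + 1),
        cCoeff (1 - α) (n - k) • (cCoeff α k • x0
            + h ^ β • ∑ r ∈ Finset.range k, dif (cCoeff (α + β)) (k - 1 - r) • F r)
          = (cCoeff (1 - α) (n - k) * cCoeff α k) • x0
            + h ^ β • (cCoeff (1 - α) (n - k) •
                ∑ r ∈ Finset.range k, dif (cCoeff (α + β)) (k - 1 - r) • F r) := by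
      intro k _
      rw [smul_add, smul_smul, smul_comm]
    rw [Finset.sum_congr rfl hsplit, Finset.sum_add_distrib, ← Finset.smul_sum,
      ← Finset.sum_smul, swap1]
    have hx0 : (∑ k ∈ Finset.range (n + 1), cCoeff (1 - α) (n - k) * cCoeff α k) = 1 := by
      have hv := vandermonde h1α hα1 n
      rw [show (1 - α) + α = 1 by ring, cCoeff_one] at hv
      rw [show (∑ k ∈ Finset.range (n + 1), cCoeff (1 - α) (n - k) * cCoeff α k)
        = conv (cCoeff (1 - α)) (cCoeff α) n from rfl, hv]
    have hconv : ∀ r ∈ Finset.range n,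
        conv (cCoeff (1 - α)) (dif (cCoeff (α + β))) (n - 1 - r) • F r
          = cCoeff β (n - 1 - r) • F r := by
      intro r _
      congr 1
      rw [conv_dif]
      have hv : ∀ m, conv (cCoeff (1 - α)) (cCoeff (α + β)) m = cCoeff (β + 1) m := by
        intro m
        rw [vandermonde h1α hab m, show (1 - α) + (α + β) = β + 1 by ring]
      have : dif (conv (cCoeff (1 - α)) (cCoeff (α + β))) (n - 1 - r)
          = dif (cCoeff (β + 1)) (n - 1 - r) := by
        rw [dif, dif, hv]
        cases (n - 1 - r) with
        | zero => rfl
        | succ p => rw [hv]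
      rw [this, dif_cCoeff hβ1]
    rw [Finset.sum_congr rfl hconv, hx0, one_smul, Yfun]
  · rw [if_neg hc]
    have hα : α = 1 := le_antisymm hα2 (not_lt.mp hc)
    have hc1 : cCoeff α n = 1 := by rw [hα]; exact cCoeff_one n
    have hd : ∀ m, dif (cCoeff (α + β)) m = cCoeff β m := by
      intro m
      rw [hα, show (1 : ℝ) + β = β + 1 by ring]
      exact dif_cCoeff hβ1 m
    rw [hc1, one_smul, Yfun,
      show (∑ r ∈ Finset.range n, dif (cCoeff (α + β)) (n - 1 - r) • F r)
        = ∑ r ∈ Finset.range n, cCoeff β (n - 1 - r) • F r from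
        Finset.sum_congr rfl fun r _ => by rw [hd]]

lemma Yfun_diff (hh : 0 < h) (hβ1 : 0 < β) (x0 : Fin d → ℝ) (F : ℕ → Fin d → ℝ) (k : ℕ) :
    Yfun h β x0 F (k + 1) - Yfun h β x0 F k
      = h ^ β • ∑ r ∈ Finset.range (k + 1), dif (cCoeff β) (k - r) • F r := by
  have hsum := sum_sub_sum_eq (cCoeff β) F (k + 1)
  simp only [Nat.add_sub_cancel] at hsum
  have h2 : ∀ r, k + 1 - 2 - r = k - 1 - r := fun r => by omega
  rw [Finset.sum_congr rfl (fun r (_ : r ∈ Finset.range k) => by rw [h2 r])] at hsum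
  rw [Yfun, Yfun]
  have habel : ∀ (a s t : Fin d → ℝ), a + s - (a + t) = s - t := by
    intro a s t; abel
  rw [habel, ← smul_sub]
  simp only [Nat.add_sub_cancel]
  rw [hsum]

lemma dif_cCoeff_one (m : ℕ) : dif (cCoeff 1) m = if m = 0 then 1 else 0 := by
  cases m with
  | zero => simp [dif, cCoeff_one]
  | succ p => simp [dif, cCoeff_one]

lemma caputo_Yfun (hh : 0 < h) (hβ1 : 0 < β) (hβ2 : β ≤ 1)
    (x0 : Fin d → ℝ) (F : ℕ → Fin d → ℝ) (n : ℕ) :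
    caputo h β (Yfun h β x0 F) n = F n := by
  rw [caputo_eq hh hβ1 hβ2 _ _ (Yfun_diff hh hβ1 x0 F) n]
  by_cases hc : β < 1
  · rw [if_pos hc, swap2]
    have h1β : (0 : ℝ) < 1 - β := by linarith
    have hconv : ∀ m, conv (cCoeff (1 - β)) (dif (cCoeff β)) m = if m = 0 then 1 else 0 := by
      intro m
      rw [conv_dif]
      have hv : ∀ m, conv (cCoeff (1 - β)) (cCoeff β) m = cCoeff 1 m := by
        intro m
        rw [vandermonde h1β hβ1 m, show (1 - β) + β = 1 by ring]
      have : dif (conv (cCoeff (1 - β)) (cCoeff β)) m = dif (cCoeff 1) m := by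
        rw [dif, dif, hv]
        cases m with
        | zero => rfl
        | succ p => rw [hv]
      rw [this, dif_cCoeff_one]
    rw [Finset.sum_congr rfl (fun r (_ : r ∈ Finset.range (n + 1)) => by rw [hconv])]
    rw [Finset.sum_range_succ]
    have hz : ∀ r ∈ Finset.range n,
        (if n - r = 0 then (1:ℝ) else 0) • F r = 0 := by
      intro r hr
      have : ¬ (n - r = 0) := by have := Finset.mem_range.mp hr; omega
      rw [if_neg this, zero_smul]
    rw [Finset.sum_congr rfl hz, Finset.sum_const_zero, zero_add, Nat.sub_self, if_pos rfl,
      one_smul]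
  · rw [if_neg hc]
    have hβ : β = 1 := le_antisymm hβ2 (not_lt.mp hc)
    rw [Finset.sum_range_succ]
    have hz : ∀ r ∈ Finset.range n, dif (cCoeff β) (n - r) • F r = 0 := by
      intro r hr
      have hnr : ¬ (n - r = 0) := by have := Finset.mem_range.mp hr; omega
      rw [hβ]
      rw [dif_cCoeff_one, if_neg hnr, zero_smul]
    rw [Finset.sum_congr rfl hz, Finset.sum_const_zero, zero_add, Nat.sub_self, hβ,
      dif_cCoeff_one, if_pos rfl, one_smul]

lemma caputo_cancel (hh : 0 < h) (hα1 : 0 < α) (hα2 : α ≤ 1) (u v : ℕ → Fin d → ℝ)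
    (h0 : u 0 = v 0) (hc : ∀ n, caputo h α u n = caputo h α v n) : ∀ n, u n = v n := by
  have step : ∀ n, (∀ k, k ≤ n → u k = v k) → u (n + 1) = v (n + 1) := by
    intro n ih
    have hcn := hc n
    rw [caputo, caputo] at hcn
    by_cases hlt : α < 1
    · rw [if_pos hlt, if_pos hlt] at hcn
      have hs : (0:ℝ) < h ^ (1 - α) := Real.rpow_pos_of_pos hh _
      have hsum := smul_right_injective (Fin d → ℝ) hs.ne' hcn
      rw [Finset.sum_range_succ, Finset.sum_range_succ] at hsum
      have hpre : ∀ k ∈ Finset.range n,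
          cCoeff (1 - α) (n - k) • (h⁻¹ • (u (k + 1) - u k))
            = cCoeff (1 - α) (n - k) • (h⁻¹ • (v (k + 1) - v k)) := by
        intro k hk
        have hk' : k < n := Finset.mem_range.mp hk
        rw [ih k (by omega), ih (k + 1) (by omega)]
      rw [Finset.sum_congr rfl hpre] at hsum
      have hlast := add_left_cancel hsum
      rw [Nat.sub_self, cCoeff_zero (by linarith : (0:ℝ) < 1 - α), one_smul, one_smul] at hlast
      have hdiff := smul_right_injective (Fin d → ℝ) (inv_ne_zero hh.ne') hlast
      have hn := ih n le_rfl
      have : u (n + 1) = (u (n + 1) - u n) + u n := by abel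
      rw [this, hdiff, hn]
      abel
    · rw [if_neg hlt, if_neg hlt] at hcn
      have hdiff := smul_right_injective (Fin d → ℝ) (inv_ne_zero hh.ne') hcn
      have hn := ih n le_rfl
      have : u (n + 1) = (u (n + 1) - u n) + u n := by abel
      rw [this, hdiff, hn]
      abel
  have main : ∀ n, ∀ k, k ≤ n → u k = v k := by
    intro n
    induction n with
    | zero => intro k hk; interval_cases k; exact h0
    | succ n ih =>
      intro k hk
      rcases Nat.lt_or_ge k (n + 1) with hlt | hge
      · exact ih k (by omega)
      · have : k = n + 1 := by omega
        rw [this]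
        exact step n ih
  exact fun n => main n n le_rfl

end Part3

end SeqCaputo


theorem ivp_iff_volterra (h α β : ℝ) (hh : 0 < h)
    (hα1 : 0 < α) (hα2 : α ≤ 1) (hβ1 : 0 < β) (hβ2 : β ≤ 1)
    (d : ℕ) (hd : 1 ≤ d) (f : ℕ → (Fin d → ℝ) → Fin d → ℝ) (xa x0 : Fin d → ℝ)
    (X : ℕ → Fin d → ℝ) :
    IsSolIVP h α β f xa x0 X ↔
      ∀ n : ℕ,
        X n = xa + phi h α β 1 0 (n : ℤ) • x0
          + h ^ (α + β) • ∑ r ∈ Finset.range (n - 1), cCoeff (α + β) (n - 2 - r) • f r (X r) := by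
  open SeqCaputo in
  constructor
  · rintro ⟨heq, h0, h1⟩
    have hCa : ∀ n, caputo h α X n = Yfun h β x0 (fun r => f r (X r)) n := by
      refine caputo_cancel hh hβ1 hβ2 _ _ ?_ ?_
      · rw [h1, Yfun_zero]
      · intro n
        rw [heq n, caputo_Yfun hh hβ1 hβ2 x0 _ n]
    have hXZ : ∀ n, X n = Zfun h α β xa x0 (fun r => f r (X r)) n := by
      refine caputo_cancel hh hα1 hα2 _ _ ?_ ?_
      · rw [h0, Zfun_zero]
      · intro n
        rw [hCa n, caputo_Zfun hh hα1 hα2 hβ1 xa x0 _ n]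
    exact fun n => hXZ n
  · intro hvol
    have hXZ : X = Zfun h α β xa x0 (fun r => f r (X r)) := funext fun n => hvol n
    have hCa : caputo h α X = Yfun h β x0 (fun r => f r (X r)) := by
      conv_lhs => rw [hXZ]
      exact funext fun n => caputo_Zfun hh hα1 hα2 hβ1 xa x0 _ n
    refine ⟨fun n => ?_, ?_, ?_⟩
    · rw [hCa, caputo_Yfun hh hβ1 hβ2 x0 _ n]
    · conv_lhs => rw [hXZ]
      exact Zfun_zero xa x0 _
    · rw [hCa]
      exact Yfun_zero x0 _
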